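/- arXiv:math/9811133 — 2 statements merged into one kernel-verified Lean document; each statement's English description precedes it below -/
import Mathlib

section
/- For every triple v = (v₁,v₂,v₃) of nonzero vectors in Z^3 with |det(v₁,v₂,v₃)| > 1, there exists a nonzero w ∈ Z^3 such that |det(w,vᵢ,vⱼ)| < |det(v₁,v₂,v₃)| for all 1 ≤ i < j ≤ 3. -/
/-- `idet3 u v w` is the determinant of the 3×3 integer matrix with columns `u`, `v`, `w`. -/
def idet3 (u v w : Fin 3 → ℤ) : ℤ := ((Matrix.of ![u, v, w]).transpose).det

def qdet3 (u v w : Fin 3 → ℚ) : ℚ := ((Matrix.of ![u, v, w]).transpose).det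

lemma qdet3_expand (u v w : Fin 3 → ℚ) :
    qdet3 u v w = u 0 * v 1 * w 2 - u 0 * v 2 * w 1 - u 1 * v 0 * w 2
      + u 1 * v 2 * w 0 + u 2 * v 0 * w 1 - u 2 * v 1 * w 0 := by
  rw [qdet3, Matrix.det_transpose]
  simp [Matrix.det_fin_three]

lemma cast_det (u v w : Fin 3 → ℤ) :
    ((idet3 u v w : ℤ) : ℚ)
      = qdet3 (fun i => (u i : ℚ)) (fun i => (v i : ℚ)) (fun i => (w i : ℚ)) := by
  rw [idet3, qdet3, Matrix.det_transpose, Matrix.det_transpose]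
  simp [Matrix.det_fin_three]

/-- Ash–Rudolph lemma for `SL₃(ℤ)`: for every triple `(v₁,v₂,v₃)` of nonzero integer
vectors with `|det(v₁,v₂,v₃)| > 1`, there is a nonzero `w ∈ ℤ³` with
`|det(w,vᵢ,vⱼ)| < |det(v₁,v₂,v₃)|` for all `1 ≤ i < j ≤ 3`. -/
theorem stmt9 (v₁ v₂ v₃ : Fin 3 → ℤ) (h₁ : v₁ ≠ 0) (h₂ : v₂ ≠ 0) (h₃ : v₃ ≠ 0)
    (hdet : 1 < |idet3 v₁ v₂ v₃|) :
    ∃ w : Fin 3 → ℤ, w ≠ 0 ∧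
      |idet3 w v₂ v₃| < |idet3 v₁ v₂ v₃| ∧
      |idet3 w v₁ v₃| < |idet3 v₁ v₂ v₃| ∧
      |idet3 w v₁ v₂| < |idet3 v₁ v₂ v₃| := by
  classical
  set M : Matrix (Fin 3) (Fin 3) ℤ := (Matrix.of ![v₁, v₂, v₃]).transpose with hM
  have hMdet : M.det = idet3 v₁ v₂ v₃ := rfl
  set D : ℤ := idet3 v₁ v₂ v₃ with hDdef
  have hD0 : D ≠ 0 := by intro h; rw [h] at hdet; simp at hdet
  have hDq : (D : ℚ) ≠ 0 := Int.cast_ne_zero.mpr hD0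
  -- entries of M
  have hMv : ∀ i', M i' 0 = v₁ i' ∧ M i' 1 = v₂ i' ∧ M i' 2 = v₃ i' := by
    intro i'; refine ⟨rfl, rfl, rfl⟩
  -- Step A: some entry of adjugate not divisible by D
  have hA : ∃ i k, ¬ (D ∣ M.adjugate i k) := by
    by_contra hcon
    push_neg at hcon
    set N : Matrix (Fin 3) (Fin 3) ℤ := fun i k => M.adjugate i k / D with hN
    have hadj : ∀ i k, M.adjugate i k = D * N i k := fun i k =>
      (Int.mul_ediv_cancel' (hcon i k)).symm
    have hMN : M * N = 1 := by
      ext i j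
      have h1 := congrFun (congrFun (Matrix.mul_adjugate M) i) j
      rw [hMdet] at h1
      apply mul_left_cancel₀ hD0
      simp only [Matrix.mul_apply, Matrix.smul_apply, smul_eq_mul] at h1 ⊢
      rw [Finset.mul_sum, ← h1]
      refine Finset.sum_congr rfl fun l _ => ?_
      rw [hadj l j]
      ring
    have hdet1 : D * N.det = 1 := by
      rw [← hMdet, ← Matrix.det_mul, hMN, Matrix.det_one]
    have : IsUnit D := IsUnit.of_mul_eq_one _ hdet1
    rcases Int.isUnit_iff.mp this with h | h <;> rw [h] at hdet <;> simp at hdet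
  obtain ⟨i₀, k, hik⟩ := hA
  set c : Fin 3 → ℚ := fun i => (M.adjugate i k : ℚ) / (D : ℚ) with hc
  -- Cramer identity
  have hsum : ∀ i', (M i' 0 : ℚ) * c 0 + (M i' 1 : ℚ) * c 1 + (M i' 2 : ℚ) * c 2
      = if i' = k then 1 else 0 := by
    intro i'
    have h1 := congrFun (congrFun (Matrix.mul_adjugate M) i') k
    rw [hMdet] at h1
    simp only [Matrix.mul_apply, Matrix.smul_apply, Matrix.one_apply, smul_eq_mul,
      Fin.sum_univ_three] at h1
    have h2 : ((M i' 0 * M.adjugate 0 k + M i' 1 * M.adjugate 1 k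
        + M i' 2 * M.adjugate 2 k : ℤ) : ℚ)
        = (D : ℚ) * (if i' = k then 1 else 0) := by
      rw [h1]; push_cast; split <;> simp
    have h3 : (M i' 0 : ℚ) * c 0 + (M i' 1 : ℚ) * c 1 + (M i' 2 : ℚ) * c 2
        = ((M i' 0 * M.adjugate 0 k + M i' 1 * M.adjugate 1 k
          + M i' 2 * M.adjugate 2 k : ℤ) : ℚ) / (D : ℚ) := by
      simp only [hc]; push_cast; ring
    rw [h3, h2, mul_div_cancel_left₀ _ hDq]
  set a : Fin 3 → ℚ := fun i => Int.fract (c i) with ha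
  have ha_nonneg : ∀ i, 0 ≤ a i := fun i => Int.fract_nonneg _
  have ha_lt : ∀ i, a i < 1 := fun i => Int.fract_lt_one _
  have hai0 : a i₀ ≠ 0 := by
    intro h
    apply hik
    have hfl : c i₀ = (⌊c i₀⌋ : ℚ) := by
      have : c i₀ - (⌊c i₀⌋ : ℚ) = 0 := h
      linarith
    refine ⟨⌊c i₀⌋, ?_⟩
    have : (M.adjugate i₀ k : ℚ) = (D : ℚ) * (⌊c i₀⌋ : ℚ) := by
      rw [hc] at hfl
      field_simp at hfl
      linarith
    exact_mod_cast this
  -- the vector w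
  set w : Fin 3 → ℤ := fun i' => (if i' = k then 1 else 0)
      - (M i' 0 * ⌊c 0⌋ + M i' 1 * ⌊c 1⌋ + M i' 2 * ⌊c 2⌋) with hw
  have hwQ : ∀ i', (w i' : ℚ)
      = a 0 * (v₁ i' : ℚ) + a 1 * (v₂ i' : ℚ) + a 2 * (v₃ i' : ℚ) := by
    intro i'
    obtain ⟨e0, e1, e2⟩ := hMv i'
    have : (w i' : ℚ) = (if i' = k then 1 else 0)
        - ((M i' 0 : ℚ) * (⌊c 0⌋ : ℚ) + (M i' 1 : ℚ) * (⌊c 1⌋ : ℚ)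
          + (M i' 2 : ℚ) * (⌊c 2⌋ : ℚ)) := by
      rw [hw]; push_cast; split <;> simp
    rw [this, ← hsum i']
    simp only [ha, Int.fract, e0, e1, e2]
    push_cast
    ring
  -- nonvanishing of w
  have hwne : w ≠ 0 := by
    intro h
    have hav : a = 0 := by
      have hmv : Matrix.mulVec (M.map (Int.cast : ℤ → ℚ)) a = 0 := by
        funext i'
        have hwi : (w i' : ℚ) = 0 := by rw [h]; simp
        rw [hwQ i'] at hwi
        obtain ⟨e0, e1, e2⟩ := hMv i'
        simp only [Matrix.mulVec, dotProduct, Fin.sum_univ_three, Matrix.map_apply,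
          Pi.zero_apply, e0, e1, e2]
        linarith [hwi]
      have hdetq : (M.map (Int.cast : ℤ → ℚ)).det = (D : ℚ) := by
        rw [← hMdet]; exact (RingHom.map_det (Int.castRingHom ℚ) M).symm
      have := Matrix.eq_zero_of_mulVec_eq_zero (by rw [hdetq]; exact hDq) hmv
      exact this
    rw [hav] at hai0
    exact hai0 rfl
  refine ⟨w, hwne, ?_, ?_, ?_⟩
  · have e1 : ((idet3 w v₂ v₃ : ℤ) : ℚ) = a 0 * (D : ℚ) := by
      rw [cast_det]
      have : (D : ℚ) = qdet3 (fun i => (v₁ i : ℚ)) (fun i => (v₂ i : ℚ))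
          (fun i => (v₃ i : ℚ)) := by rw [hDdef, cast_det]
      rw [this]
      simp only [qdet3_expand, hwQ]
      ring
    have : |((idet3 w v₂ v₃ : ℤ) : ℚ)| < |((D : ℤ) : ℚ)| := by
      rw [e1, abs_mul, abs_of_nonneg (ha_nonneg 0)]
      have h2 : (0 : ℚ) < |(D : ℚ)| := abs_pos.mpr hDq
      calc a 0 * |(D : ℚ)| < 1 * |(D : ℚ)| := mul_lt_mul_of_pos_right (ha_lt 0) h2
        _ = |(D : ℚ)| := one_mul _
    exact_mod_cast this
  · have e1 : ((idet3 w v₁ v₃ : ℤ) : ℚ) = -(a 1) * (D : ℚ) := by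
      rw [cast_det]
      have : (D : ℚ) = qdet3 (fun i => (v₁ i : ℚ)) (fun i => (v₂ i : ℚ))
          (fun i => (v₃ i : ℚ)) := by rw [hDdef, cast_det]
      rw [this]
      simp only [qdet3_expand, hwQ]
      ring
    have : |((idet3 w v₁ v₃ : ℤ) : ℚ)| < |((D : ℤ) : ℚ)| := by
      rw [e1, abs_mul, abs_neg, abs_of_nonneg (ha_nonneg 1)]
      have h2 : (0 : ℚ) < |(D : ℚ)| := abs_pos.mpr hDq
      calc a 1 * |(D : ℚ)| < 1 * |(D : ℚ)| := mul_lt_mul_of_pos_right (ha_lt 1) h2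
        _ = |(D : ℚ)| := one_mul _
    exact_mod_cast this
  · have e1 : ((idet3 w v₁ v₂ : ℤ) : ℚ) = a 2 * (D : ℚ) := by
      rw [cast_det]
      have : (D : ℚ) = qdet3 (fun i => (v₁ i : ℚ)) (fun i => (v₂ i : ℚ))
          (fun i => (v₃ i : ℚ)) := by rw [hDdef, cast_det]
      rw [this]
      simp only [qdet3_expand, hwQ]
      ring
    have : |((idet3 w v₁ v₂ : ℤ) : ℚ)| < |((D : ℤ) : ℚ)| := by
      rw [e1, abs_mul, abs_of_nonneg (ha_nonneg 2)]
      have h2 : (0 : ℚ) < |(D : ℚ)| := abs_pos.mpr hDq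
      calc a 2 * |(D : ℚ)| < 1 * |(D : ℚ)| := mul_lt_mul_of_pos_right (ha_lt 2) h2
        _ = |(D : ℚ)| := one_mul _
    exact_mod_cast this
end

section
/- The barycenters realizing a flag of subsets are affinely independent: if ∅ ⊊ I₀ ⊊ I₁ ⊊ ⋯ ⊊ I_m ⊆ {0,…,k} is a strictly increasing chain of nonempty subsets, then the points b(I_j) = (Σ_{i∈I_j} e_i)/#I_j in R^{k+1} are affinely independent. -/
/-- The barycenter `b(I) = (Σ_{i∈I} e_i)/#I` of the face of the standard simplex
corresponding to `I ⊆ {0,…,k}`, as a point of `ℝ^{k+1}`. -/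
noncomputable def baryPt {k : ℕ} (I : Finset (Fin (k + 1))) : Fin (k + 1) → ℝ :=
  (I.card : ℝ)⁻¹ • ∑ i ∈ I, Pi.single i (1 : ℝ)

/-- The barycenters realizing a flag of subsets are affinely independent: if
`∅ ⊊ I₀ ⊊ I₁ ⊊ ⋯ ⊊ I_m ⊆ {0,…,k}` is a strictly increasing chain of nonempty subsets,
then the points `b(I_j)` in `ℝ^{k+1}` are affinely independent. -/
theorem stmt15 (k m : ℕ) (I : Fin (m + 1) → Finset (Fin (k + 1)))
    (hne : ∀ j, (I j).Nonempty) (hmono : StrictMono fun j => I j) :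
    AffineIndependent ℝ (fun j => baryPt (I j)) := by
  classical
  rw [affineIndependent_iff]
  intro s w' hw0' hsum'
  set w : Fin (m + 1) → ℝ := fun j => if j ∈ s then w' j else 0 with hwdef
  have hw0 : ∑ j, w j = 0 := by
    rw [hwdef]
    simpa [Finset.sum_ite_mem, Finset.univ_inter] using hw0'
  have hsum : ∑ j, w j • baryPt (I j) = (0 : Fin (k + 1) → ℝ) := by
    rw [← hsum',
      ← Finset.sum_subset (Finset.subset_univ s) (fun j _ hj => by simp [hwdef, hj])]
    exact Finset.sum_congr rfl fun j hj => by simp [hwdef, hj]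
  suffices hall : ∀ e, w e = 0 by
    intro e he
    simpa [hwdef, he] using hall e
  have hmono' : Monotone fun j => I j := hmono.monotone
  have hcne : ∀ j, ((I j).card : ℝ)⁻¹ ≠ 0 := fun j =>
    inv_ne_zero (Nat.cast_ne_zero.mpr (Finset.card_ne_zero.mpr (hne j)))
  have key : ∀ e : Fin (m + 1),
      ∑ j ∈ Finset.Ici e, w j * ((I j).card : ℝ)⁻¹ = 0 := by
    intro e
    obtain ⟨i, hi⟩ : ∃ i, ∀ j, i ∈ I j ↔ e ≤ j := by
      rcases eq_or_ne e 0 with rfl | he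
      · obtain ⟨i, hi⟩ := hne 0
        exact ⟨i, fun j => ⟨fun _ => Fin.zero_le j, fun _ => hmono' (Fin.zero_le j) hi⟩⟩
      · have hepos : 0 < e.val := Nat.pos_of_ne_zero (fun h => he (Fin.ext h))
        set p : Fin (m + 1) := ⟨e.val - 1, by omega⟩ with hp
        have hpe : p < e := by rw [Fin.lt_def]; show e.val - 1 < e.val; omega
        obtain ⟨i, hiI, hip⟩ := Finset.exists_of_ssubset (hmono hpe)
        refine ⟨i, fun j => ⟨?_, fun h => hmono' h hiI⟩⟩
        intro hij
        by_contra hle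
        push_neg at hle
        have hjp : j ≤ p := by
          simp only [Fin.le_def, hp]
          have := (Fin.lt_def.mp hle)
          omega
        exact hip (hmono' hjp hij)
    have h0 := congrFun hsum i
    simp only [Finset.sum_apply, Pi.smul_apply, Pi.zero_apply, baryPt, smul_eq_mul] at h0
    have hval : ∀ j : Fin (m + 1),
        ∑ c ∈ I j, Pi.single c (1 : ℝ) i = if i ∈ I j then 1 else 0 := by
      intro j
      simp [Pi.single_apply, Finset.sum_ite_eq]
    have h1 : ∀ j : Fin (m + 1),
        w j * (((I j).card : ℝ)⁻¹ * ∑ c ∈ I j, Pi.single c (1 : ℝ) i)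
          = if e ≤ j then w j * ((I j).card : ℝ)⁻¹ else 0 := by
      intro j
      rw [hval]
      by_cases hej : e ≤ j
      · rw [if_pos ((hi j).mpr hej), if_pos hej]; ring
      · rw [if_neg (fun h => hej ((hi j).mp h)), if_neg hej]; ring
    calc ∑ j ∈ Finset.Ici e, w j * ((I j).card : ℝ)⁻¹
        = ∑ j : Fin (m + 1), if e ≤ j then w j * ((I j).card : ℝ)⁻¹ else 0 := by
          rw [← Finset.sum_filter]
          congr 1
          ext j
          simp
      _ = 0 := by
          rw [← Finset.sum_congr rfl fun j _ => h1 j]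
          simpa using h0
  suffices H : ∀ n, ∀ e : Fin (m + 1), m - e.val ≤ n → w e = 0 by
    intro e; exact H m e (by omega)
  intro n
  induction n with
  | zero =>
      intro e hh
      have hem : e.val = m := by omega
      have hIci : Finset.Ici e = {e} := by
        ext j
        simp only [Finset.mem_Ici, Finset.mem_singleton]
        constructor
        · intro hj
          have hjl := j.isLt
          rw [Fin.le_def] at hj
          exact Fin.ext (by omega)
        · rintro rfl; exact le_rfl
      have := key e
      rw [hIci, Finset.sum_singleton] at this
      exact (mul_eq_zero.mp this).resolve_right (hcne e)
  | succ n ih =>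
      intro e hh
      have hIci : Finset.Ici e = insert e (Finset.Ioi e) := by
        ext j; simp [le_iff_lt_or_eq, eq_comm, or_comm]
      have hz : ∀ j ∈ Finset.Ioi e, w j * ((I j).card : ℝ)⁻¹ = 0 := by
        intro j hj
        rw [Finset.mem_Ioi, Fin.lt_def] at hj
        rw [ih j (by have := j.isLt; omega)]
        ring
      have := key e
      rw [hIci, Finset.sum_insert (by simp), Finset.sum_eq_zero hz, add_zero] at this
      exact (mul_eq_zero.mp this).resolve_right (hcne e)
end
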